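/- arXiv:2108.05091 — 3 statements merged into one kernel-verified Lean document; each statement's English description precedes it below -/
import Mathlib

section
/- Let f, g be probability density functions on ℝ with means μ_f, μ_g and variances σ_f², σ_g² (all finite). Then (μ_f − μ_g)² ≤ 2(μ_f² + μ_g² + σ_f² + σ_g²) · d_TV(f,g), where d_TV(f,g) = (1/2)∫|f − g|. -/
open MeasureTheory

noncomputable def dTV (f g : ℝ → ℝ) : ℝ := (1/2) * ∫ x, |f x - g x|

theorem stmt_3 (f g : ℝ → ℝ) (μf μg σf σg : ℝ)
    (hfm : Measurable f) (hgm : Measurable g)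
    (hf : Integrable f) (hg : Integrable g)
    (hf0 : ∀ x, 0 ≤ f x) (hg0 : ∀ x, 0 ≤ g x)
    (hf1 : ∫ x, f x = 1) (hg1 : ∫ x, g x = 1)
    (hf1' : Integrable (fun y => y * f y))
    (hg1' : Integrable (fun y => y * g y))
    (hf2 : Integrable (fun y => y ^ 2 * f y))
    (hg2 : Integrable (fun y => y ^ 2 * g y))
    (hμf : μf = ∫ y, y * f y) (hμg : μg = ∫ y, y * g y)
    (hσf : σf ^ 2 = (∫ y, y ^ 2 * f y) - μf ^ 2)
    (hσg : σg ^ 2 = (∫ y, y ^ 2 * g y) - μg ^ 2) :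
    (μf - μg) ^ 2 ≤ 2 * (μf ^ 2 + μg ^ 2 + σf ^ 2 + σg ^ 2) * dTV f g := by
  set h : ℝ → ℝ := fun y => |f y - g y| with hh
  have hhm : Measurable h := (hfm.sub hgm).abs
  have hh0 : ∀ y, 0 ≤ h y := fun y => abs_nonneg _
  have hhle : ∀ y, h y ≤ f y + g y := fun y => by
    have := abs_sub (f y) (g y)
    calc h y = |f y - g y| := rfl
    _ ≤ |f y| + |g y| := abs_sub _ _
    _ = f y + g y := by rw [abs_of_nonneg (hf0 y), abs_of_nonneg (hg0 y)]
  -- integrabilities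
  have hhint : Integrable h := by
    refine (hf.add hg).mono hhm.aestronglyMeasurable (Filter.Eventually.of_forall fun y => ?_)
    simp only [Real.norm_eq_abs, Pi.add_apply]
    rw [abs_of_nonneg (hh0 y), abs_of_nonneg (add_nonneg (hf0 y) (hg0 y))]
    exact hhle y
  have h2int : Integrable (fun y => y ^ 2 * h y) := by
    refine (hf2.add hg2).mono (((measurable_id.pow_const 2).mul hhm).aestronglyMeasurable)
      (Filter.Eventually.of_forall fun y => ?_)
    simp only [Real.norm_eq_abs, Pi.add_apply]
    rw [abs_of_nonneg (by positivity : (0:ℝ) ≤ y ^ 2 * h y),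
      abs_of_nonneg (add_nonneg (mul_nonneg (sq_nonneg y) (hf0 y)) (mul_nonneg (sq_nonneg y) (hg0 y)))]
    nlinarith [hhle y, sq_nonneg y]
  have h1int : Integrable (fun y => |y| * h y) := by
    refine (hf1'.add hg1').mono ((measurable_abs.mul hhm).aestronglyMeasurable)
      (Filter.Eventually.of_forall fun y => ?_)
    simp only [Real.norm_eq_abs, Pi.add_apply]
    rw [abs_of_nonneg (by positivity : (0:ℝ) ≤ |y| * h y)]
    have : |y * f y + y * g y| = |y| * (f y + g y) := by
      rw [← mul_add, abs_mul, abs_of_nonneg (add_nonneg (hf0 y) (hg0 y))]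
    rw [this]
    exact mul_le_mul_of_nonneg_left (hhle y) (abs_nonneg y)
  -- step 1: |μf - μg| ≤ ∫ |y| * h y
  have step1 : |μf - μg| ≤ ∫ y, |y| * h y := by
    have : μf - μg = ∫ y, (y * f y - y * g y) := by
      rw [integral_sub hf1' hg1', hμf, hμg]
    rw [this]
    calc |∫ y, (y * f y - y * g y)| ≤ ∫ y, |y * f y - y * g y| :=
          by
          simpa only [Real.norm_eq_abs] using
            norm_integral_le_integral_norm (fun y => y * f y - y * g y)
      _ = ∫ y, |y| * h y := by
          congr 1; funext y; rw [← mul_sub, abs_mul]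
  -- step 2: Cauchy-Schwarz
  have hX0 : 0 ≤ ∫ y, y ^ 2 * h y := integral_nonneg fun y => by positivity
  have hC0 : 0 ≤ ∫ y, h y := integral_nonneg hh0
  have step2 : (∫ y, |y| * h y) ^ 2 ≤ (∫ y, y ^ 2 * h y) * (∫ y, h y) := by
    set A : ℝ → ℝ := fun y => |y| * Real.sqrt (h y) with hA
    set B : ℝ → ℝ := fun y => Real.sqrt (h y) with hB
    have hAm : Measurable A := measurable_abs.mul hhm.sqrt
    have hBm : Measurable B := hhm.sqrt
    have hA2 : ∀ y, A y ^ (2:ℝ) = y ^ 2 * h y := fun y => by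
      rw [Real.rpow_two, mul_pow, Real.sq_sqrt (hh0 y), sq_abs]
    have hB2 : ∀ y, B y ^ (2:ℝ) = h y := fun y => by
      rw [Real.rpow_two, Real.sq_sqrt (hh0 y)]
    have hAB : ∀ y, A y * B y = |y| * h y := fun y => by
      rw [hA, hB]; simp only
      rw [mul_assoc, Real.mul_self_sqrt (hh0 y)]
    have hAmem : MemLp A (ENNReal.ofReal 2) := by
      rw [show ENNReal.ofReal 2 = 2 by norm_num]
      rw [memLp_two_iff_integrable_sq hAm.aestronglyMeasurable]
      refine h2int.congr (Filter.Eventually.of_forall fun y => ?_)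
      show y ^ 2 * h y = A y ^ 2
      rw [← hA2 y, Real.rpow_two]
    have hBmem : MemLp B (ENNReal.ofReal 2) := by
      rw [show ENNReal.ofReal 2 = 2 by norm_num]
      rw [memLp_two_iff_integrable_sq hBm.aestronglyMeasurable]
      refine hhint.congr (Filter.Eventually.of_forall fun y => ?_)
      show h y = B y ^ 2
      conv_lhs => rw [← hB2 y]
      rw [Real.rpow_two]
    have hpq : Real.HolderConjugate 2 2 := Real.HolderConjugate.two_two
    have holder := integral_mul_le_Lp_mul_Lq_of_nonneg hpq
      (Filter.Eventually.of_forall fun y => by positivity)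
      (Filter.Eventually.of_forall fun y => Real.sqrt_nonneg _) hAmem hBmem
    have hl : ∫ y, A y * B y = ∫ y, |y| * h y := by
      congr 1; funext y; exact hAB y
    have hr1 : ∫ y, A y ^ (2:ℝ) = ∫ y, y ^ 2 * h y := by
      congr 1; funext y; exact hA2 y
    have hr2 : ∫ y, B y ^ (2:ℝ) = ∫ y, h y := by
      congr 1; funext y; exact hB2 y
    rw [hl, hr1, hr2] at holder
    have hS0 : 0 ≤ ∫ y, |y| * h y := integral_nonneg fun y => by positivity
    calc (∫ y, |y| * h y) ^ 2
        ≤ ((∫ y, y ^ 2 * h y) ^ ((1:ℝ)/2) * (∫ y, h y) ^ ((1:ℝ)/2)) ^ 2 := by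
          apply pow_le_pow_left₀ hS0 holder
      _ = (∫ y, y ^ 2 * h y) * (∫ y, h y) := by
          rw [mul_pow, ← Real.rpow_natCast (_ ^ ((1:ℝ)/2)) 2,
            ← Real.rpow_natCast ((∫ y, h y) ^ ((1:ℝ)/2)) 2,
            ← Real.rpow_mul hX0, ← Real.rpow_mul hC0]
          norm_num
  -- step 3: second moment bound
  have step3 : (∫ y, y ^ 2 * h y) ≤ (∫ y, y ^ 2 * f y) + (∫ y, y ^ 2 * g y) := by
    rw [← integral_add hf2 hg2]
    refine integral_mono h2int (hf2.add hg2) fun y => ?_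
    simp only
    nlinarith [hhle y, sq_nonneg y]
  -- assemble
  have hdtv : ∫ y, h y = 2 * dTV f g := by
    rw [dTV]; ring
  have key : (μf - μg) ^ 2 ≤ ((∫ y, y ^ 2 * f y) + (∫ y, y ^ 2 * g y)) * (2 * dTV f g) := by
    calc (μf - μg) ^ 2 = |μf - μg| ^ 2 := (sq_abs _).symm
      _ ≤ (∫ y, |y| * h y) ^ 2 := pow_le_pow_left₀ (abs_nonneg _) step1 2
      _ ≤ (∫ y, y ^ 2 * h y) * (∫ y, h y) := step2
      _ ≤ ((∫ y, y ^ 2 * f y) + (∫ y, y ^ 2 * g y)) * (∫ y, h y) :=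
          mul_le_mul_of_nonneg_right step3 hC0
      _ = ((∫ y, y ^ 2 * f y) + (∫ y, y ^ 2 * g y)) * (2 * dTV f g) := by rw [hdtv]
  have e1 : (∫ y, y ^ 2 * f y) = μf ^ 2 + σf ^ 2 := by linarith [hσf]
  have e2 : (∫ y, y ^ 2 * g y) = μg ^ 2 + σg ^ 2 := by linarith [hσg]
  rw [e1, e2] at key
  linarith [key]
end

section
/- Let f, g be probability density functions on ℝ with means μ_f, μ_g and variances σ_f², σ_g², not both densities degenerate (so that μ_f² + μ_g² + σ_f² + σ_g² > 0). Then 1 − d_TV(f,g) ≤ 1/2 + (2μ_f μ_g + σ_f² + σ_g²)/(2(μ_f² + μ_g² + σ_f² + σ_g²)). -/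
open MeasureTheory

theorem stmt_4 (f g : ℝ → ℝ) (μf μg σf σg : ℝ)
    (hfm : Measurable f) (hgm : Measurable g)
    (hf : Integrable f) (hg : Integrable g)
    (hf0 : ∀ x, 0 ≤ f x) (hg0 : ∀ x, 0 ≤ g x)
    (hf1 : ∫ x, f x = 1) (hg1 : ∫ x, g x = 1)
    (hf1' : Integrable (fun y => y * f y))
    (hg1' : Integrable (fun y => y * g y))
    (hf2 : Integrable (fun y => y ^ 2 * f y))
    (hg2 : Integrable (fun y => y ^ 2 * g y))
    (hμf : μf = ∫ y, y * f y) (hμg : μg = ∫ y, y * g y)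
    (hσf : σf ^ 2 = (∫ y, y ^ 2 * f y) - μf ^ 2)
    (hσg : σg ^ 2 = (∫ y, y ^ 2 * g y) - μg ^ 2)
    (hpos : 0 < μf ^ 2 + μg ^ 2 + σf ^ 2 + σg ^ 2) :
    1 - dTV f g ≤ 1/2 + (2 * μf * μg + σf ^ 2 + σg ^ 2) /
      (2 * (μf ^ 2 + μg ^ 2 + σf ^ 2 + σg ^ 2)) := by
  unfold dTV
  set S := μf ^ 2 + μg ^ 2 + σf ^ 2 + σg ^ 2 with hSdef
  set B := ∫ x, |f x - g x| with hBdef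
  have hS : 0 < S := hpos
  have hB0 : 0 ≤ B := integral_nonneg fun x => abs_nonneg _
  have hsub : Integrable (fun y => f y - g y) := hf.sub hg
  have habsint : Integrable (fun y => |f y - g y|) := hsub.abs
  have hyh : Integrable (fun y => y * (f y - g y)) := by
    have := hf1'.sub hg1'
    simpa [mul_sub, Pi.sub_def] using this
  have hbnd : ∀ y : ℝ, |f y - g y| ≤ f y + g y := by
    intro y
    calc |f y - g y| ≤ |f y| + |g y| := abs_sub _ _
    _ = f y + g y := by rw [abs_of_nonneg (hf0 y), abs_of_nonneg (hg0 y)]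
  have hy2habs : Integrable (fun y => y ^ 2 * |f y - g y|) := by
    refine (hf2.add hg2).mono
      ((measurable_id.pow_const 2).mul ((hfm.sub hgm).abs)).aestronglyMeasurable ?_
    filter_upwards with y
    have h2 : (0:ℝ) ≤ y ^ 2 := sq_nonneg y
    simp only [Real.norm_eq_abs, Pi.add_apply]
    have e1 : abs (y ^ 2 * |f y - g y|) = y ^ 2 * |f y - g y| :=
      abs_of_nonneg (by positivity)
    rw [e1]
    calc y ^ 2 * |f y - g y| ≤ y ^ 2 * (f y + g y) :=
          mul_le_mul_of_nonneg_left (hbnd y) h2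
      _ = y ^ 2 * f y + y ^ 2 * g y := by ring
      _ ≤ |y ^ 2 * f y + y ^ 2 * g y| := le_abs_self _
  set A := ∫ y, y ^ 2 * |f y - g y| with hAdef
  have hA0 : 0 ≤ A := integral_nonneg fun y => by positivity
  have hAS : A ≤ S := by
    have h1 : A ≤ ∫ y, (y ^ 2 * f y + y ^ 2 * g y) := by
      refine integral_mono hy2habs (hf2.add hg2) fun y => ?_
      nlinarith [hbnd y, sq_nonneg y]
    have h2 : ∫ y, (y ^ 2 * f y + y ^ 2 * g y)
        = (∫ y, y ^ 2 * f y) + ∫ y, y ^ 2 * g y := integral_add hf2 hg2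
    rw [h2] at h1
    rw [hSdef]
    linarith [hσf, hσg]
  have hD : μf - μg = ∫ y, y * (f y - g y) := by
    rw [hμf, hμg, ← integral_sub hf1' hg1']
    congr 1; funext y; ring
  have hyhabs : Integrable (fun y => |y| * |f y - g y|) := by
    simpa [abs_mul] using hyh.abs
  clear_value S B A
  have key : ∀ t : ℝ, 0 < t → |μf - μg| ≤ (t * S + (1/t) * B) / 2 := by
    intro t ht
    have h1 : |μf - μg| ≤ ∫ y, |y| * |f y - g y| := by
      rw [hD]
      simpa [Real.norm_eq_abs, abs_mul] using
        norm_integral_le_integral_norm (μ := volume) (fun y => y * (f y - g y))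
    have h2 : (∫ y, |y| * |f y - g y|)
        ≤ ∫ y, (t * (y ^ 2 * |f y - g y|) + (1/t) * |f y - g y|) / 2 := by
      refine integral_mono hyhabs
        (((hy2habs.const_mul t).add (habsint.const_mul (1/t))).div_const 2) fun y => ?_
      have ht' : 0 < 1/t := by positivity
      have h4 : 2 * |y| ≤ t * y ^ 2 + 1/t := by
        have h5 : t * y ^ 2 = t * |y| ^ 2 := by rw [sq_abs]
        rw [h5, ← sub_nonneg]
        have h6 : t * |y| ^ 2 + 1/t - 2 * |y| = (t * |y| - 1) ^ 2 / t := by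
          field_simp
          ring
        rw [h6]; positivity
      nlinarith [abs_nonneg (f y - g y), abs_nonneg y]
    have h3 : (∫ y, (t * (y ^ 2 * |f y - g y|) + (1/t) * |f y - g y|) / 2)
        = (t * A + (1/t) * B) / 2 := by
      rw [hAdef, hBdef, integral_div,
        integral_add (hy2habs.const_mul t) (habsint.const_mul (1/t)),
        integral_const_mul, integral_const_mul]
    have h6 : t * A ≤ t * S := by nlinarith
    rw [h3] at h2
    have h7 : (t * A + 1/t * B) / 2 ≤ (t * S + 1/t * B) / 2 := by linarith
    exact h1.trans (h2.trans h7)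
  have hkey : (μf - μg) ^ 2 ≤ S * B := by
    rcases eq_or_lt_of_le (abs_nonneg (μf - μg)) with h | h
    · have h0 : μf - μg = 0 := by rwa [eq_comm, abs_eq_zero] at h
      rw [h0]
      simpa using mul_nonneg hS.le hB0
    · have ht : 0 < |μf - μg| / S := div_pos h hS
      have hk := key _ ht
      have h1 : (|μf - μg| / S) * S = |μf - μg| := div_mul_cancel₀ _ (ne_of_gt hS)
      have h2 : (1 : ℝ) / (|μf - μg| / S) = S / |μf - μg| := one_div_div _ _
      rw [h1, h2] at hk
      have h3 : (S / |μf - μg|) * B * |μf - μg| = S * B := by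
        field_simp
      nlinarith [sq_abs (μf - μg), abs_nonneg (μf - μg)]
  have h3 : (μf - μg) ^ 2 / (2 * S) ≤ B / 2 := by
    rw [div_le_div_iff₀ (by linarith) two_pos]
    nlinarith
  have hne : μf ^ 2 + μg ^ 2 + σf ^ 2 + σg ^ 2 ≠ 0 := by rw [← hSdef]; exact hS.ne'
  have h4 : (2 * μf * μg + σf ^ 2 + σg ^ 2) / (2 * S)
      = 1/2 - (μf - μg) ^ 2 / (2 * S) := by
    rw [hSdef]
    field_simp
    ring
  rw [h4]
  linarith
end

section
/- Let f^0, ..., f^{n} be probability density functions on ℝ with finite second moments, means μ_i and variances σ_i², and suppose μ_i² + μ_j² + σ_i² + σ_j² > 0 for all i ≠ j. Then the sum over all pairs 0 ≤ i < j ≤ n of (1 − d_TV(f^i, f^j)) is at most the sum over all pairs of (1/2 + (2μ_i μ_j + σ_i² + σ_j²)/(2(μ_i² + μ_j² + σ_i² + σ_j²))). -/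
open MeasureTheory Finset

lemma key_ineq (f g : ℝ → ℝ) (hfi : Integrable f) (hgi : Integrable g)
    (hf0 : ∀ x, 0 ≤ f x) (hg0 : ∀ x, 0 ≤ g x)
    (hfi1 : Integrable (fun y => y * f y)) (hgi1 : Integrable (fun y => y * g y))
    (hfi2 : Integrable (fun y => y ^ 2 * f y)) (hgi2 : Integrable (fun y => y ^ 2 * g y))
    (M : ℝ) (hM : (∫ y, y ^ 2 * f y) + (∫ y, y ^ 2 * g y) ≤ M) (hMpos : 0 < M) :
    ((∫ y, y * f y) - (∫ y, y * g y)) ^ 2 ≤ M * ∫ y, |f y - g y| := by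
  set Δ := (∫ y, y * f y) - (∫ y, y * g y) with hΔ
  set T := ∫ y, |f y - g y| with hT
  have hTint : Integrable (fun y => |f y - g y|) := (hfi.sub hgi).abs
  have hT0 : 0 ≤ T := integral_nonneg fun y => abs_nonneg _
  have habsint : Integrable (fun y => |y| * |f y - g y|) := by
    have : Integrable (fun y => |y * f y - y * g y|) := (hfi1.sub hgi1).abs
    refine this.congr ?_
    filter_upwards with y
    rw [← abs_mul]; ring_nf
  have hsqint : Integrable (fun y => y ^ 2 * |f y - g y|) := by
    have : Integrable (fun y => |y ^ 2 * f y - y ^ 2 * g y|) := (hfi2.sub hgi2).abs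
    refine this.congr ?_
    filter_upwards with y
    rw [← mul_sub, abs_mul, abs_of_nonneg (sq_nonneg y)]
  -- |Δ| ≤ ∫ |y| |f - g|
  have hΔle : |Δ| ≤ ∫ y, |y| * |f y - g y| := by
    have h1 : Δ = ∫ y, (y * f y - y * g y) := by
      rw [hΔ, integral_sub hfi1 hgi1]
    rw [h1]
    calc |∫ y, (y * f y - y * g y)| ≤ ∫ y, |y * f y - y * g y| := by
          simpa [Real.norm_eq_abs] using
            norm_integral_le_integral_norm (fun y => y * f y - y * g y)
      _ = ∫ y, |y| * |f y - g y| := by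
          congr 1; funext y; rw [← abs_mul]; ring_nf
  -- second moment bound
  have hS : (∫ y, y ^ 2 * |f y - g y|) ≤ M := by
    have h2 : (∫ y, y ^ 2 * |f y - g y|) ≤ ∫ y, (y ^ 2 * f y + y ^ 2 * g y) := by
      refine integral_mono hsqint (hfi2.add hgi2) fun y => ?_
      have := abs_sub_abs_le_abs_sub (f y) (g y)
      have h3 : |f y - g y| ≤ f y + g y := by
        rw [abs_sub_le_iff]
        constructor <;> nlinarith [hf0 y, hg0 y]
      nlinarith [sq_nonneg y]
    rw [integral_add hfi2 hgi2] at h2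
    linarith
  -- main: for each t > 0, |Δ| ≤ t/2 * T + M/(2t)
  have hmain : ∀ t : ℝ, 0 < t → |Δ| ≤ t / 2 * T + M / (2 * t) := by
    intro t ht
    have hpt : ∀ y : ℝ, |y| * |f y - g y| ≤
        t / 2 * |f y - g y| + 1 / (2 * t) * (y ^ 2 * |f y - g y|) := by
      intro y
      have ha : 0 ≤ |f y - g y| := abs_nonneg _
      have hy : |y| ≤ t / 2 + y ^ 2 / (2 * t) := by
        rw [div_add_div _ _ (by norm_num : (2:ℝ) ≠ 0) (by positivity)]
        rw [le_div_iff₀ (by positivity)]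
        nlinarith [sq_nonneg (|y| - t), sq_abs y]
      calc |y| * |f y - g y| ≤ (t / 2 + y ^ 2 / (2 * t)) * |f y - g y| :=
            mul_le_mul_of_nonneg_right hy ha
        _ = t / 2 * |f y - g y| + 1 / (2 * t) * (y ^ 2 * |f y - g y|) := by
            field_simp
    have hint : (∫ y, |y| * |f y - g y|) ≤
        ∫ y, (t / 2 * |f y - g y| + 1 / (2 * t) * (y ^ 2 * |f y - g y|)) := by
      exact integral_mono habsint ((hTint.const_mul _).add (hsqint.const_mul _)) hpt
    rw [integral_add (hTint.const_mul _) (hsqint.const_mul _),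
      integral_const_mul, integral_const_mul] at hint
    have hS' : 1 / (2 * t) * (∫ y, y ^ 2 * |f y - g y|) ≤ 1 / (2 * t) * M :=
      mul_le_mul_of_nonneg_left hS (by positivity)
    calc |Δ| ≤ ∫ y, |y| * |f y - g y| := hΔle
      _ ≤ t / 2 * T + 1 / (2 * t) * (∫ y, y ^ 2 * |f y - g y|) := hint
      _ ≤ t / 2 * T + M / (2 * t) := by
          rw [div_eq_mul_one_div M (2*t), mul_comm M (1/(2*t))]; linarith
  by_cases hΔ0 : Δ = 0
  · rw [hΔ0]; nlinarith [mul_nonneg hMpos.le hT0]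
  · have hΔa : 0 < |Δ| := abs_pos.mpr hΔ0
    have := hmain (M / |Δ|) (by positivity)
    have h4 : |Δ| ≤ M / |Δ| / 2 * T + M / (2 * (M / |Δ|)) := this
    have h5 : M / (2 * (M / |Δ|)) = |Δ| / 2 := by
      field_simp
    rw [h5] at h4
    have h6 : |Δ| / 2 ≤ M / |Δ| / 2 * T := by linarith
    have h7 : |Δ| ^ 2 ≤ M * T := by
      have hmul := mul_le_mul_of_nonneg_left h6 (le_of_lt hΔa)
      have heq : |Δ| * (M / |Δ| / 2 * T) = M * T / 2 := by
        field_simp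
      rw [heq] at hmul
      nlinarith [hmul]
    calc Δ ^ 2 = |Δ| ^ 2 := (sq_abs Δ).symm
      _ ≤ M * T := h7

theorem stmt_6 (n : ℕ) (f : Fin (n + 1) → ℝ → ℝ) (μ σ : Fin (n + 1) → ℝ)
    (hfm : ∀ i, Measurable (f i)) (hfi : ∀ i, Integrable (f i))
    (hf0 : ∀ i x, 0 ≤ f i x) (hf1 : ∀ i, ∫ x, f i x = 1)
    (hfi1 : ∀ i, Integrable (fun y => y * f i y))
    (hfi2 : ∀ i, Integrable (fun y => y ^ 2 * f i y))
    (hμ : ∀ i, μ i = ∫ y, y * f i y)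
    (hσ : ∀ i, σ i ^ 2 = (∫ y, y ^ 2 * f i y) - μ i ^ 2)
    (hpos : ∀ i j, i ≠ j → 0 < μ i ^ 2 + μ j ^ 2 + σ i ^ 2 + σ j ^ 2) :
    ∑ i : Fin (n + 1), ∑ j ∈ Finset.Ioi i, (1 - dTV (f i) (f j)) ≤
    ∑ i : Fin (n + 1), ∑ j ∈ Finset.Ioi i,
      (1/2 + (2 * μ i * μ j + σ i ^ 2 + σ j ^ 2) /
        (2 * (μ i ^ 2 + μ j ^ 2 + σ i ^ 2 + σ j ^ 2))) := by
  refine Finset.sum_le_sum fun i _ => Finset.sum_le_sum fun j hj => ?_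
  have hij : i ≠ j := (Finset.mem_Ioi.mp hj).ne
  set D := μ i ^ 2 + μ j ^ 2 + σ i ^ 2 + σ j ^ 2 with hD
  have hDpos : 0 < D := hpos i j hij
  have hMi : (∫ y, y ^ 2 * f i y) = σ i ^ 2 + μ i ^ 2 := by have := hσ i; linarith
  have hMj : (∫ y, y ^ 2 * f j y) = σ j ^ 2 + μ j ^ 2 := by have := hσ j; linarith
  have hkey := key_ineq (f i) (f j) (hfi i) (hfi j) (hf0 i) (hf0 j)
    (hfi1 i) (hfi1 j) (hfi2 i) (hfi2 j) D (by rw [hMi, hMj]; ring_nf; linarith) hDpos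
  rw [← hμ i, ← hμ j] at hkey
  -- hkey : (μ i - μ j)^2 ≤ D * ∫ |f i - f j|
  have hdTV : dTV (f i) (f j) = (1/2) * ∫ x, |f i x - f j x| := rfl
  have halg : (1:ℝ)/2 + (2 * μ i * μ j + σ i ^ 2 + σ j ^ 2) / (2 * D)
      = 1 - (μ i - μ j) ^ 2 / (2 * D) := by
    field_simp
    ring
  rw [halg]
  have h8 : (μ i - μ j) ^ 2 / (2 * D) ≤ dTV (f i) (f j) := by
    rw [hdTV, div_le_iff₀ (by positivity)]
    calc (μ i - μ j) ^ 2 ≤ D * ∫ x, |f i x - f j x| := hkey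
      _ = 1 / 2 * (∫ x, |f i x - f j x|) * (2 * D) := by ring
  linarith
end
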